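/- Let q be a real number with 0 < q < 1, let c₀, d₀ be complex numbers with c₀ d₀ = 1, and let A be an associative unital ℂ-algebra containing an invertible element x and elements y, ŷ satisfying: y x = q² x y; ŷ x = q^{-2} x ŷ; ŷ y = −(q^{-1}x − c₀)(q^{-1}x − d₀); y ŷ = −(q x − c₀)(q x − d₀). Set a = q^{1/2}/(q^{-1} − q), E = a·y, F = a·x^{-1}ŷ, K = x, K^{-1} = x^{-1}. Then (1/2)(E F + F E) + ((q^{-1} + q)/(2(q^{-1} − q)²))·(K − 2 + K^{-1}) = ((c₀ + d₀ − q − q^{-1})/(q^{-1} − q)²)·1_A. -/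

import Mathlib

set_option maxHeartbeats 1000000 in
/-- the quantum moment map sends the quantum quadratic Casimir
element of `U_q(sl(2))` to the scalar `(c₀ + d₀ − q − q⁻¹)/(q⁻¹ − q)²` in the
quantum algebra of functions on the quantum hyperboloid `X_{c₀,d₀}`. -/
theorem quantum_moment_map_casimir
    (q : ℝ) (hq0 : 0 < q) (hq1 : q < 1)
    (c₀ d₀ : ℂ) (hcd : c₀ * d₀ = 1)
    (A : Type*) [Ring A] [Algebra ℂ A]
    (x x' y yh : A)
    (hxx' : x * x' = 1) (hx'x : x' * x = 1)
    (h1 : y * x = ((q : ℂ) ^ 2) • (x * y))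
    (h2 : yh * x = ((q : ℂ) ^ 2)⁻¹ • (x * yh))
    (h3 : yh * y = -((((q : ℂ))⁻¹ • x - c₀ • (1 : A)) * (((q : ℂ))⁻¹ • x - d₀ • (1 : A))))
    (h4 : y * yh = -(((q : ℂ) • x - c₀ • (1 : A)) * ((q : ℂ) • x - d₀ • (1 : A))))
    (a : ℂ) (ha : a = (Real.sqrt q : ℂ) / (((q : ℂ))⁻¹ - (q : ℂ)))
    (E F : A) (hE : E = a • y) (hF : F = a • (x' * yh)) :
    (1 / 2 : ℂ) • (E * F + F * E) +
        ((((q : ℂ))⁻¹ + (q : ℂ)) / (2 * (((q : ℂ))⁻¹ - (q : ℂ)) ^ 2)) •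
          (x - (2 : ℂ) • (1 : A) + x') =
      ((c₀ + d₀ - (q : ℂ) - ((q : ℂ))⁻¹) / ((((q : ℂ))⁻¹ - (q : ℂ)) ^ 2)) • (1 : A) := by
  have hqC : (q : ℂ) ≠ 0 := by exact_mod_cast hq0.ne'
  have hdR : q⁻¹ - q > 0 := by
    have : q < q⁻¹ := lt_trans hq1 (by exact (one_lt_inv₀ hq0).2 hq1)
    linarith
  have hdC : ((q : ℂ))⁻¹ - (q : ℂ) ≠ 0 := by
    have : ((q⁻¹ - q : ℝ) : ℂ) ≠ 0 := by exact_mod_cast hdR.ne'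
    push_cast at this
    exact this
  have hr : (Real.sqrt q : ℂ) * (Real.sqrt q : ℂ) = (q : ℂ) := by
    have := Real.mul_self_sqrt hq0.le
    exact_mod_cast this
  -- commutation of y with x'
  have hyx' : x' * y = ((q : ℂ) ^ 2) • (y * x') := by
    calc x' * y = x' * (y * x) * x' := by
          rw [mul_assoc, mul_assoc, hxx', mul_one]
      _ = ((q : ℂ) ^ 2) • (y * x') := by
          rw [h1, mul_smul_comm, smul_mul_assoc, ← mul_assoc, hx'x, one_mul]
  have hy'x : y * x' = (((q : ℂ) ^ 2))⁻¹ • (x' * y) := by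
    rw [hyx', smul_smul, inv_mul_cancel₀ (pow_ne_zero 2 hqC), one_smul]
  -- expansions
  have key4 : x' * (y * yh)
      = (-((q : ℂ) ^ 2)) • x + ((q : ℂ) * (c₀ + d₀)) • (1 : A) - x' := by
    rw [h4]
    have expand : ((q : ℂ) • x - c₀ • (1 : A)) * ((q : ℂ) • x - d₀ • (1 : A))
        = ((q : ℂ) ^ 2) • (x * x) - ((q : ℂ) * (c₀ + d₀)) • x + (1 : A) := by
      rw [mul_sub, sub_mul, sub_mul]
      rw [smul_mul_smul_comm, smul_mul_smul_comm, smul_mul_smul_comm, smul_mul_smul_comm]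
      rw [hcd, one_smul]
      simp only [mul_one, one_mul]
      module
    rw [expand]
    rw [mul_neg, mul_add, mul_sub, mul_smul_comm, mul_smul_comm, ← mul_assoc, hx'x, one_mul,
      mul_one]
    module
  have key3 : x' * (yh * y)
      = (-(((q : ℂ))⁻¹ ^ 2)) • x + (((q : ℂ))⁻¹ * (c₀ + d₀)) • (1 : A) - x' := by
    rw [h3]
    have expand : (((q : ℂ))⁻¹ • x - c₀ • (1 : A)) * (((q : ℂ))⁻¹ • x - d₀ • (1 : A))
        = (((q : ℂ))⁻¹ ^ 2) • (x * x) - (((q : ℂ))⁻¹ * (c₀ + d₀)) • x + (1 : A) := by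
      rw [mul_sub, sub_mul, sub_mul]
      rw [smul_mul_smul_comm, smul_mul_smul_comm, smul_mul_smul_comm, smul_mul_smul_comm]
      rw [hcd, one_smul]
      simp only [mul_one, one_mul]
      module
    rw [expand]
    rw [mul_neg, mul_add, mul_sub, mul_smul_comm, mul_smul_comm, ← mul_assoc, hx'x, one_mul,
      mul_one]
    module
  -- E F and F E
  have hEF : E * F = (a * a * (((q : ℂ) ^ 2))⁻¹) • (x' * (y * yh)) := by
    rw [hE, hF, smul_mul_smul_comm]
    rw [show y * (x' * yh) = (y * x') * yh by rw [mul_assoc]]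
    rw [hy'x, smul_mul_assoc, mul_assoc, smul_smul]
  have hFE : F * E = (a * a) • (x' * (yh * y)) := by
    rw [hE, hF, smul_mul_smul_comm, mul_assoc]
  have haa : a * a = (q : ℂ) / ((((q : ℂ))⁻¹ - (q : ℂ)) ^ 2) := by
    rw [ha, div_mul_div_comm, hr, pow_two]
  have h1q : (1 : ℂ) - (q : ℂ) ^ 2 ≠ 0 := by
    have : ((1 - q ^ 2 : ℝ) : ℂ) ≠ 0 := by
      exact_mod_cast (by nlinarith : (1 - q ^ 2 : ℝ) > 0).ne'
    push_cast at this
    exact this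
  rw [hEF, hFE, key4, key3, haa]
  have hu : (q : ℂ) * ((q : ℂ))⁻¹ = 1 := mul_inv_cancel₀ hqC
  rw [show ((q : ℂ) ^ 2)⁻¹ = ((q : ℂ))⁻¹ ^ 2 from (inv_pow _ _).symm]
  have hdC2 : ((q : ℂ))⁻¹ - (q : ℂ) ≠ 0 := hdC
  generalize hg : ((q : ℂ))⁻¹ = u at hu hdC2 ⊢
  have hd2 : (u - (q : ℂ)) ≠ 0 := hdC2
  match_scalars
  · field_simp
    linear_combination (-u - (q:ℂ) - (q:ℂ)^2*u) * hu
  · field_simp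
    linear_combination (2*c₀ + 2*d₀ + (q:ℂ)*u*c₀ + (q:ℂ)*u*d₀) * hu
  · field_simp
    linear_combination (-u) * hu
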